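/- With the MERA setup below, for every operator O_{AR} ∈ B(H_A ⊗ H_R), tr[ρ_0^{AR} O_{AR}] = tr[ρ_s^{A_sR} (Φ_A ⊗ id_R)(O_{AR})], where ρ_0^{AR} = tr_B |ρ_0⟩⟨ρ_0|, ρ_s^{A_sR} = tr_{B_s} |ρ_s⟩⟨ρ_s|, and Φ_A ⊗ id_R is the linear map determined by (Φ_A ⊗ id_R)(O_A ⊗ O_R) = Φ_A(O_A) ⊗ O_R. -/

import Mathlib

open scoped Kronecker ComplexOrder Matrix Classical

/-- The operator norm of a matrix, i.e. the norm of the induced linear map on Euclidean space. -/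
noncomputable def opNorm {n : Type} [Fintype n] [DecidableEq n] (A : Matrix n n ℂ) : ℝ :=
  ‖Matrix.toEuclideanCLM (𝕜 := ℂ) A‖

/-- The positive semidefinite square root of a positive semidefinite matrix
(the definition Mathlib had, since removed). -/
noncomputable def Matrix.PosSemidef.sqrt {n : Type} [Fintype n] [DecidableEq n]
    {A : Matrix n n ℂ} (hA : A.PosSemidef) : Matrix n n ℂ :=
  (hA.1.eigenvectorUnitary : Matrix n n ℂ) *
    Matrix.diagonal ((↑) ∘ (Real.sqrt ·) ∘ hA.1.eigenvalues) *
    (star hA.1.eigenvectorUnitary : Matrix n n ℂ)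

/-- The positive-semidefinite square root (junk value `0` off the PSD cone). -/
noncomputable def psdSqrt {n : Type} [Fintype n] [DecidableEq n] (A : Matrix n n ℂ) :
    Matrix n n ℂ :=
  if h : A.PosSemidef then h.sqrt else 0

/-- The trace norm `‖A‖₁ = tr √(AᴴA)`. -/
noncomputable def traceNorm {n : Type} [Fintype n] [DecidableEq n] (A : Matrix n n ℂ) : ℝ :=
  ((psdSqrt (Aᴴ * A)).trace).re

/-- Fidelity `F(ρ,σ) = tr √(√ρ σ √ρ)`. -/
noncomputable def fidelity {n : Type} [Fintype n] [DecidableEq n] (ρ σ : Matrix n n ℂ) : ℝ :=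
  ((psdSqrt (psdSqrt ρ * σ * psdSqrt ρ)).trace).re

/-- Bures distance `𝔅(ρ,σ) = √(2(1 − F(ρ,σ)))`. -/
noncomputable def bures {n : Type} [Fintype n] [DecidableEq n] (ρ σ : Matrix n n ℂ) : ℝ :=
  Real.sqrt (2 * (1 - fidelity ρ σ))

/-- The rank-one projector `|ψ⟩⟨ψ|`. -/
def outer {n : Type} [Fintype n] (ψ : n → ℂ) : Matrix n n ℂ :=
  Matrix.of fun i j => ψ i * (starRingEnd ℂ) (ψ j)

/-- Complete positivity of a linear map between matrix algebras: for every `k`, the map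
`id_{M_k} ⊗ Φ` (acting blockwise) preserves positive semidefiniteness. -/
def IsCompletelyPositive {n m : Type} [Fintype n] [DecidableEq n] [Fintype m] [DecidableEq m]
    (Φ : Matrix n n ℂ →ₗ[ℂ] Matrix m m ℂ) : Prop :=
  ∀ (k : ℕ) (M : Matrix (Fin k × n) (Fin k × n) ℂ), M.PosSemidef →
    (Matrix.of fun (p q : Fin k × m) =>
      (Φ (Matrix.of fun a b => M (p.1, a) (q.1, b))) p.2 q.2).PosSemidef

private lemma mera_sum_swap {A B R₁ R₂ : Type} [Fintype A] [Fintype B] [Fintype R₁] [Fintype R₂]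
    (x : A → B → R₁ → R₂ → ℂ) (O : A → R₁ → R₂ → A → R₁ → R₂ → ℂ) :
    (∑ a : A, ∑ r1 : R₁, ∑ r2 : R₂, ∑ a' : A, ∑ r1' : R₁, ∑ r2' : R₂,
      (∑ b : B, x a b r1 r2 * star (x a' b r1' r2')) * O a' r1' r2' a r1 r2)
    = ∑ r1 : R₁, ∑ r2 : R₂, ∑ r1' : R₁, ∑ r2' : R₂, ∑ a : A, ∑ b : B,
      (∑ a' : A, star (x a' b r1' r2') * O a' r1' r2' a r1 r2) * x a b r1 r2 := by
  simp only [Finset.sum_mul]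
  rw [Finset.sum_comm]
  refine Finset.sum_congr rfl fun r1 _ => ?_
  rw [Finset.sum_comm]
  refine Finset.sum_congr rfl fun r2 _ => ?_
  conv_lhs => enter [2, a]; rw [Finset.sum_comm]
  rw [Finset.sum_comm]
  refine Finset.sum_congr rfl fun r1' _ => ?_
  conv_lhs => enter [2, a]; rw [Finset.sum_comm]
  rw [Finset.sum_comm]
  refine Finset.sum_congr rfl fun r2' _ => ?_
  refine Finset.sum_congr rfl fun a _ => ?_
  rw [Finset.sum_comm]
  refine Finset.sum_congr rfl fun b _ => Finset.sum_congr rfl fun a' _ => ?_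
  ring
/-- Renormalization identity: with `|ρ_s⟩ = (√ρ_s ⊗ U)|Ω⟩` and
`|ρ_0⟩ = (V ⊗ 1_R)|ρ_s⟩`, for every `O_{AR} ∈ B(H_A ⊗ H_R)` one has
`tr[ρ_0^{AR} O_{AR}] = tr[ρ_s^{A_sR} (Φ_A ⊗ id_R)(O_{AR})]`. -/
theorem mera_renormalization_identity
    {A B As Bs : Type} [Fintype A] [DecidableEq A] [Fintype B] [DecidableEq B]
    [Fintype As] [DecidableEq As] [Fintype Bs] [DecidableEq Bs]
    -- the MERA isometry `V : H_s → H_0` and its locality (causal cone) property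
    (V : Matrix (A × B) (As × Bs) ℂ) (hV : Vᴴ * V = 1)
    (ΦA : Matrix A A ℂ →ₗ[ℂ] Matrix As As ℂ)
    (hloc : ∀ OA : Matrix A A ℂ,
      Vᴴ * (OA ⊗ₖ (1 : Matrix B B ℂ)) * V = ΦA OA ⊗ₖ (1 : Matrix Bs Bs ℂ))
    -- the code state data: a density matrix on `H_s` and a unitary on the purifying space
    (ρs : Matrix (As × Bs) (As × Bs) ℂ) (hρ : ρs.PosSemidef) (hρtr : ρs.trace = 1)
    (U : Matrix (As × Bs) (As × Bs) ℂ) (hU : U ∈ Matrix.unitaryGroup (As × Bs) ℂ)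
    (OAR : Matrix (A × (As × Bs)) (A × (As × Bs)) ℂ) :
    -- the maximally entangled vector `|Ω⟩ = ∑ i |i⟩⊗|i⟩`
    let Ω : (As × Bs) × (As × Bs) → ℂ := fun p => if p.1 = p.2 then 1 else 0
    -- the purified code states `|ρ_s⟩` and `|ρ_0⟩`
    let ρsVec : (As × Bs) × (As × Bs) → ℂ := (hρ.sqrt ⊗ₖ U).mulVec Ω
    let ρ0Vec : (A × B) × (As × Bs) → ℂ :=
      (V ⊗ₖ (1 : Matrix (As × Bs) (As × Bs) ℂ)).mulVec ρsVec
    -- `ρ_0^{AR} = tr_B |ρ_0⟩⟨ρ_0|` and `ρ_s^{A_sR} = tr_{B_s} |ρ_s⟩⟨ρ_s|`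
    let ρ0AR : Matrix (A × (As × Bs)) (A × (As × Bs)) ℂ :=
      Matrix.of fun p q => ∑ b : B, outer ρ0Vec ((p.1, b), p.2) ((q.1, b), q.2)
    let ρsAsR : Matrix (As × (As × Bs)) (As × (As × Bs)) ℂ :=
      Matrix.of fun p q => ∑ b : Bs, outer ρsVec ((p.1, b), p.2) ((q.1, b), q.2)
    -- the extension `Φ_A ⊗ id_R`, acting blockwise
    let ΦAR : Matrix (A × (As × Bs)) (A × (As × Bs)) ℂ →
        Matrix (As × (As × Bs)) (As × (As × Bs)) ℂ :=
      fun O => Matrix.of fun p q =>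
        (ΦA (Matrix.of fun a b => O (a, p.2) (b, q.2))) p.1 q.1
    (ρ0AR * OAR).trace = (ρsAsR * ΦAR OAR).trace := by
  intro Ω ρsVec ρ0Vec ρ0AR ρsAsR ΦAR
  have hv : ∀ (p : A × B) (r : As × Bs),
      ρ0Vec (p, r) = ∑ s : As × Bs, V p s * ρsVec (s, r) := by
    intro p r
    simp [ρ0Vec, Matrix.mulVec, dotProduct, Fintype.sum_prod_type, Matrix.one_apply,
      mul_ite, mul_one, mul_zero, Finset.sum_ite_eq, ite_mul, zero_mul]
  have hvw : (Matrix.of fun p r => ρ0Vec (p, r))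
      = V * (Matrix.of fun (s r : As × Bs) => ρsVec (s, r)) := by
    ext p r
    simp [Matrix.mul_apply, hv]
  have step3 : ∀ X : Matrix A A ℂ,
      (Matrix.of fun p r => ρ0Vec (p, r))ᴴ * (X ⊗ₖ (1 : Matrix B B ℂ)) *
        (Matrix.of fun p r => ρ0Vec (p, r))
      = (Matrix.of fun (s r : As × Bs) => ρsVec (s, r))ᴴ *
          (ΦA X ⊗ₖ (1 : Matrix Bs Bs ℂ)) *
          (Matrix.of fun (s r : As × Bs) => ρsVec (s, r)) := by
    intro X
    rw [hvw, Matrix.conjTranspose_mul]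
    have h1 : ∀ (M : Matrix (As × Bs) (As × Bs) ℂ),
        Mᴴ * Vᴴ * (X ⊗ₖ (1 : Matrix B B ℂ)) * (V * M)
        = Mᴴ * (Vᴴ * (X ⊗ₖ (1 : Matrix B B ℂ)) * V) * M := by
      intro M; simp only [Matrix.mul_assoc]
    rw [h1, hloc X, Matrix.mul_assoc]
  have step1 : (ρ0AR * OAR).trace
      = ∑ r : As × Bs, ∑ r' : As × Bs,
          ((Matrix.of fun p r => ρ0Vec (p, r))ᴴ *
            ((Matrix.of fun a' a => OAR (a', r') (a, r)) ⊗ₖ (1 : Matrix B B ℂ)) *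
            (Matrix.of fun p r => ρ0Vec (p, r))) r' r := by
    simp only [Matrix.trace, Matrix.diag_apply, Matrix.mul_apply, Matrix.conjTranspose_apply,
      Matrix.kroneckerMap_apply, Matrix.one_apply, Matrix.of_apply, ρ0AR, outer,
      Fintype.sum_prod_type, mul_ite, mul_one, mul_zero, Finset.sum_ite_eq,
      Finset.sum_ite_eq', Finset.mem_univ, if_true, ite_mul, zero_mul, starRingEnd_apply]
    exact mera_sum_swap (fun a b r1 r2 => ρ0Vec ((a, b), (r1, r2)))
      (fun a' r1' r2' a r1 r2 => OAR (a', (r1', r2')) (a, (r1, r2)))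
  have step2 : (ρsAsR * ΦAR OAR).trace
      = ∑ r : As × Bs, ∑ r' : As × Bs,
          ((Matrix.of fun (s r : As × Bs) => ρsVec (s, r))ᴴ *
            ((ΦA (Matrix.of fun a' a => OAR (a', r') (a, r))) ⊗ₖ (1 : Matrix Bs Bs ℂ)) *
            (Matrix.of fun (s r : As × Bs) => ρsVec (s, r))) r' r := by
    simp only [Matrix.trace, Matrix.diag_apply, Matrix.mul_apply, Matrix.conjTranspose_apply,
      Matrix.kroneckerMap_apply, Matrix.one_apply, Matrix.of_apply, ρsAsR, ΦAR, outer,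
      Fintype.sum_prod_type, mul_ite, mul_one, mul_zero, Finset.sum_ite_eq,
      Finset.sum_ite_eq', Finset.mem_univ, if_true, ite_mul, zero_mul, starRingEnd_apply]
    exact mera_sum_swap (fun s y r1 r2 => ρsVec ((s, y), (r1, r2)))
      (fun x' r1' r2' x r1 r2 =>
        (ΦA (Matrix.of fun a' a => OAR (a', (r1', r2')) (a, (r1, r2)))) x' x)
  rw [step1, step2]
  exact Finset.sum_congr rfl fun r _ => Finset.sum_congr rfl fun r' _ => by rw [step3]
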